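/- Let U be a random variable and Z_1, ..., Z_N, Z_{N+1} be conditionally i.i.d. given U. Then I(U; Z_1,...,Z_N) ≥ N · I(U; Z_{N+1} | Z_1,...,Z_N). -/

import Mathlib

open scoped BigOperators

/-- Distribution (pushforward) of a random variable `X` under weights `p`. -/
noncomputable def distOf {Ω α : Type*} [Fintype Ω] [DecidableEq α]
    (p : Ω → ℝ) (X : Ω → α) (a : α) : ℝ :=
  ∑ ω, if X ω = a then p ω else 0

/-- Shannon entropy of a random variable. -/
noncomputable def entOf {Ω α : Type*} [Fintype Ω] [Fintype α] [DecidableEq α]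
    (p : Ω → ℝ) (X : Ω → α) : ℝ :=
  -∑ a, distOf p X a * Real.log (distOf p X a)

/-- Conditional entropy H(Y|X). -/
noncomputable def condEntOf {Ω α β : Type*} [Fintype Ω] [Fintype α] [Fintype β]
    [DecidableEq α] [DecidableEq β] (p : Ω → ℝ) (Y : Ω → β) (X : Ω → α) : ℝ :=
  entOf p (fun ω => (Y ω, X ω)) - entOf p X

/-- Mutual information I(A;B). -/
noncomputable def miOf {Ω α β : Type*} [Fintype Ω] [Fintype α] [Fintype β]
    [DecidableEq α] [DecidableEq β] (p : Ω → ℝ) (A : Ω → α) (B : Ω → β) : ℝ :=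
  entOf p A + entOf p B - entOf p (fun ω => (A ω, B ω))

/-- Conditional mutual information I(A;B|C). -/
noncomputable def cmiOf {Ω α β γ : Type*} [Fintype Ω] [Fintype α] [Fintype β] [Fintype γ]
    [DecidableEq α] [DecidableEq β] [DecidableEq γ]
    (p : Ω → ℝ) (A : Ω → α) (B : Ω → β) (C : Ω → γ) : ℝ :=
  condEntOf p A C - condEntOf p A (fun ω => (B ω, C ω))

/-- `p` is a probability mass function on the finite sample space. -/
def IsPMF {Ω : Type*} [Fintype Ω] (p : Ω → ℝ) : Prop :=
  (∀ ω, 0 ≤ p ω) ∧ ∑ ω, p ω = 1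

/-- A and B are conditionally independent given C. -/
def CondIndep {Ω α β γ : Type*} [Fintype Ω] [DecidableEq α] [DecidableEq β] [DecidableEq γ]
    (p : Ω → ℝ) (A : Ω → α) (B : Ω → β) (C : Ω → γ) : Prop :=
  ∀ a b c, distOf p (fun ω => (A ω, B ω, C ω)) (a, b, c) * distOf p C c =
    distOf p (fun ω => (A ω, C ω)) (a, c) * distOf p (fun ω => (B ω, C ω)) (b, c)

/-- Equality in distribution. -/
def IdentDist {Ω α : Type*} [Fintype Ω] [DecidableEq α]
    (p : Ω → ℝ) (X Y : Ω → α) : Prop := ∀ a, distOf p X a = distOf p Y a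

/-- Bayesian risk: infimum over measurable (automatic here) decision rules of the
expected loss. -/
noncomputable def risk {Ω α 𝒞 𝒜 : Type*} [Fintype Ω]
    (p : Ω → ℝ) (ℓ : 𝒞 → 𝒜 → ℝ) (C : Ω → 𝒞) (A : Ω → α) : ℝ :=
  ⨅ ψ : α → 𝒜, ∑ ω, p ω * ℓ (C ω) (ψ (A ω))

section Lem
variable {Ω : Type*} [Fintype Ω] {p : Ω → ℝ}

lemma distOf_nonneg {α} [DecidableEq α] (hp : ∀ ω, 0 ≤ p ω) (X : Ω → α) (a : α) :
    0 ≤ distOf p X a :=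
  Finset.sum_nonneg fun ω _ => by split <;> simp [hp ω]

lemma distOf_mono {α β} [DecidableEq α] [DecidableEq β] (hp : ∀ ω, 0 ≤ p ω)
    {X : Ω → α} {Y : Ω → β} {a : α} {b : β} (h : ∀ ω, X ω = a → Y ω = b) :
    distOf p X a ≤ distOf p Y b := by
  refine Finset.sum_le_sum fun ω _ => ?_
  by_cases hX : X ω = a
  · simp [hX, h ω hX]
  · simp only [if_neg hX]; split <;> simp [hp ω]

lemma sum_distOf {α} [Fintype α] [DecidableEq α] (hp : IsPMF p) (X : Ω → α) :
    ∑ a, distOf p X a = 1 := by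
  unfold distOf
  rw [Finset.sum_comm]
  simp [Finset.sum_ite_eq, hp.2]

lemma distOf_comp {α β} [Fintype α] [DecidableEq α] [DecidableEq β]
    (p : Ω → ℝ) (X : Ω → α) (h : α → β) (b : β) :
    distOf p (fun ω => h (X ω)) b = ∑ a, if h a = b then distOf p X a else 0 := by
  unfold distOf
  have h1 : ∀ a : α, (if h a = b then ∑ ω, if X ω = a then p ω else 0 else 0)
      = ∑ ω, if X ω = a then (if h a = b then p ω else 0) else 0 := by
    intro a; split
    · rfl
    · rw [Finset.sum_eq_zero]; intro ω _; simp
  rw [Finset.sum_congr rfl fun a _ => h1 a, Finset.sum_comm]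
  refine Finset.sum_congr rfl fun ω _ => ?_
  rw [Finset.sum_ite_eq]
  simp

lemma distOf_comp_inj {α β} [Fintype α] [DecidableEq α] [DecidableEq β]
    (p : Ω → ℝ) (X : Ω → α) {e : α → β} (he : Function.Injective e) (a : α) :
    distOf p (fun ω => e (X ω)) (e a) = distOf p X a := by
  rw [distOf_comp]
  simp only [he.eq_iff]
  rw [Finset.sum_ite_eq']
  simp

lemma entOf_comp {α β} [Fintype α] [Fintype β] [DecidableEq α] [DecidableEq β]
    (p : Ω → ℝ) (X : Ω → α) (h : α → β) :
    entOf p (fun ω => h (X ω)) =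
      -∑ a, distOf p X a * Real.log (distOf p (fun ω => h (X ω)) (h a)) := by
  unfold entOf
  congr 1
  calc ∑ b, distOf p (fun ω => h (X ω)) b * Real.log (distOf p (fun ω => h (X ω)) b)
      = ∑ b, ∑ a, (if h a = b then distOf p X a * Real.log (distOf p (fun ω => h (X ω)) b) else 0) := by
        refine Finset.sum_congr rfl fun b _ => ?_
        rw [distOf_comp, Finset.sum_mul]
        exact Finset.sum_congr rfl fun a _ => by split <;> simp
    _ = ∑ a, ∑ b, (if h a = b then distOf p X a * Real.log (distOf p (fun ω => h (X ω)) b) else 0) :=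
        Finset.sum_comm
    _ = ∑ a, distOf p X a * Real.log (distOf p (fun ω => h (X ω)) (h a)) := by
        refine Finset.sum_congr rfl fun a _ => ?_
        rw [Finset.sum_ite_eq]
        simp

lemma entOf_comp_inj {α β} [Fintype α] [Fintype β] [DecidableEq α] [DecidableEq β]
    (p : Ω → ℝ) (X : Ω → α) {e : α → β} (he : Function.Injective e) :
    entOf p (fun ω => e (X ω)) = entOf p X := by
  rw [entOf_comp]
  unfold entOf
  congr 1
  exact Finset.sum_congr rfl fun a _ => by rw [distOf_comp_inj p X he]

lemma entOf_congr {α} [Fintype α] [DecidableEq α] {X Y : Ω → α}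
    (h : ∀ a, distOf p X a = distOf p Y a) : entOf p X = entOf p Y := by
  unfold entOf
  congr 1
  exact Finset.sum_congr rfl fun a _ => by rw [h a]

lemma sum_distOf_left {α β} [Fintype α] [Fintype β] [DecidableEq α] [DecidableEq β]
    (X : Ω → α) (Y : Ω → β) (c : β) :
    ∑ b, distOf p (fun ω => (X ω, Y ω)) (b, c) = distOf p Y c := by
  unfold distOf
  rw [Finset.sum_comm]
  refine Finset.sum_congr rfl fun ω _ => ?_
  simp only [Prod.mk.injEq]
  by_cases hy : Y ω = c
  · simp [hy, Finset.sum_ite_eq]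
  · simp [hy]

lemma sum_distOf_right {α β} [Fintype α] [Fintype β] [DecidableEq α] [DecidableEq β]
    (X : Ω → α) (Y : Ω → β) (b : α) :
    ∑ c, distOf p (fun ω => (X ω, Y ω)) (b, c) = distOf p X b := by
  unfold distOf
  rw [Finset.sum_comm]
  refine Finset.sum_congr rfl fun ω _ => ?_
  simp only [Prod.mk.injEq]
  by_cases hx : X ω = b
  · simp [hx, Finset.sum_ite_eq]
  · simp [hx]

lemma sum_distOf_trd {α β γ} [Fintype α] [Fintype β] [Fintype γ]
    [DecidableEq α] [DecidableEq β] [DecidableEq γ]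
    (X : Ω → α) (Y : Ω → β) (C : Ω → γ) (x : α) (y : β) :
    ∑ c, distOf p (fun ω => (X ω, Y ω, C ω)) (x, y, c)
      = distOf p (fun ω => (X ω, Y ω)) (x, y) := by
  unfold distOf
  rw [Finset.sum_comm]
  refine Finset.sum_congr rfl fun ω _ => ?_
  simp only [Prod.mk.injEq]
  by_cases hx : X ω = x ∧ Y ω = y
  · simp [hx.1, hx.2, Finset.sum_ite_eq]
  · rw [Finset.sum_eq_zero, if_neg hx]
    intro c _
    rw [if_neg]
    tauto

end Lem

section CMI
variable {Ω α β γ : Type*} [Fintype Ω] [Fintype α] [Fintype β] [Fintype γ]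
  [DecidableEq α] [DecidableEq β] [DecidableEq γ]
  {p : Ω → ℝ} (A : Ω → α) (B : Ω → β) (C : Ω → γ)

lemma cmi_eq (p : Ω → ℝ) :
    cmiOf p A B C = ∑ t : α × β × γ,
      distOf p (fun ω => (A ω, B ω, C ω)) t *
        (Real.log (distOf p (fun ω => (A ω, B ω, C ω)) t)
          + Real.log (distOf p C t.2.2)
          - Real.log (distOf p (fun ω => (A ω, C ω)) (t.1, t.2.2))
          - Real.log (distOf p (fun ω => (B ω, C ω)) t.2)) := by
  have hAC : entOf p (fun ω => (A ω, C ω))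
      = -∑ t : α × β × γ, distOf p (fun ω => (A ω, B ω, C ω)) t *
          Real.log (distOf p (fun ω => (A ω, C ω)) (t.1, t.2.2)) := by
    have := entOf_comp p (fun ω => (A ω, B ω, C ω)) (fun t => (t.1, t.2.2))
    exact this
  have hC : entOf p C
      = -∑ t : α × β × γ, distOf p (fun ω => (A ω, B ω, C ω)) t *
          Real.log (distOf p C t.2.2) := by
    have := entOf_comp p (fun ω => (A ω, B ω, C ω)) (fun t => t.2.2)
    exact this
  have hBC : entOf p (fun ω => (B ω, C ω))
      = -∑ t : α × β × γ, distOf p (fun ω => (A ω, B ω, C ω)) t *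
          Real.log (distOf p (fun ω => (B ω, C ω)) t.2) := by
    have := entOf_comp p (fun ω => (A ω, B ω, C ω)) (fun t => t.2)
    exact this
  unfold cmiOf condEntOf
  rw [hAC, hC, hBC]
  unfold entOf
  rw [show (∑ t : α × β × γ,
      distOf p (fun ω => (A ω, B ω, C ω)) t *
        (Real.log (distOf p (fun ω => (A ω, B ω, C ω)) t)
          + Real.log (distOf p C t.2.2)
          - Real.log (distOf p (fun ω => (A ω, C ω)) (t.1, t.2.2))
          - Real.log (distOf p (fun ω => (B ω, C ω)) t.2)))
    = ((∑ t : α × β × γ, distOf p (fun ω => (A ω, B ω, C ω)) t *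
          Real.log (distOf p (fun ω => (A ω, B ω, C ω)) t))
      + (∑ t : α × β × γ, distOf p (fun ω => (A ω, B ω, C ω)) t *
          Real.log (distOf p C t.2.2))
      - (∑ t : α × β × γ, distOf p (fun ω => (A ω, B ω, C ω)) t *
          Real.log (distOf p (fun ω => (A ω, C ω)) (t.1, t.2.2)))
      - (∑ t : α × β × γ, distOf p (fun ω => (A ω, B ω, C ω)) t *
          Real.log (distOf p (fun ω => (B ω, C ω)) t.2))) from by
    rw [← Finset.sum_add_distrib, ← Finset.sum_sub_distrib, ← Finset.sum_sub_distrib]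
    exact Finset.sum_congr rfl fun t _ => by ring]
  ring

lemma cmi_nonneg (hp : IsPMF p) : 0 ≤ cmiOf p A B C := by
  rw [cmi_eq]
  set P := distOf p (fun ω => (A ω, B ω, C ω)) with hP
  set Pc := distOf p C with hPc
  set Pac := distOf p (fun ω => (A ω, C ω)) with hPac
  set Pbc := distOf p (fun ω => (B ω, C ω)) with hPbc
  have hPn : ∀ t, 0 ≤ P t := distOf_nonneg hp.1 _
  have hPcn : ∀ c, 0 ≤ Pc c := distOf_nonneg hp.1 _
  have hPacn : ∀ x, 0 ≤ Pac x := distOf_nonneg hp.1 _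
  have hPbcn : ∀ x, 0 ≤ Pbc x := distOf_nonneg hp.1 _
  have hmc : ∀ t : α × β × γ, P t ≤ Pc t.2.2 := fun t =>
    distOf_mono hp.1 (fun ω h => by rw [← h])
  have hmac : ∀ t : α × β × γ, P t ≤ Pac (t.1, t.2.2) := fun t =>
    distOf_mono hp.1 (fun ω h => by rw [← h])
  have hmbc : ∀ t : α × β × γ, P t ≤ Pbc t.2 := fun t =>
    distOf_mono hp.1 (fun ω h => by rw [← h])
  set g : α × β × γ → ℝ := fun t =>
    if Pc t.2.2 = 0 then 0 else Pac (t.1, t.2.2) * Pbc t.2 / Pc t.2.2 with hg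
  have hgn : ∀ t, 0 ≤ g t := by
    intro t; rw [hg]; dsimp only
    split
    · exact le_rfl
    · next h =>
        exact div_nonneg (mul_nonneg (hPacn _) (hPbcn _)) (hPcn _)
  have key : ∀ t : α × β × γ, P t - g t ≤ P t *
      (Real.log (P t) + Real.log (Pc t.2.2) - Real.log (Pac (t.1, t.2.2)) - Real.log (Pbc t.2)) := by
    intro t
    by_cases hPt : P t = 0
    · rw [hPt, zero_mul, zero_sub]
      linarith [hgn t]
    · have hPt' : 0 < P t := lt_of_le_of_ne (hPn t) (Ne.symm hPt)
      have hPc' : 0 < Pc t.2.2 := lt_of_lt_of_le hPt' (hmc t)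
      have hPac' : 0 < Pac (t.1, t.2.2) := lt_of_lt_of_le hPt' (hmac t)
      have hPbc' : 0 < Pbc t.2 := lt_of_lt_of_le hPt' (hmbc t)
      have hgt : g t = Pac (t.1, t.2.2) * Pbc t.2 / Pc t.2.2 := by
        rw [hg]; dsimp only; rw [if_neg hPc'.ne']
      set x := Pac (t.1, t.2.2) * Pbc t.2 / (Pc t.2.2 * P t) with hx
      have hx' : 0 < x := div_pos (mul_pos hPac' hPbc') (mul_pos hPc' hPt')
      have hlogx : Real.log x
          = Real.log (Pac (t.1, t.2.2)) + Real.log (Pbc t.2)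
            - (Real.log (Pc t.2.2) + Real.log (P t)) := by
        rw [hx, Real.log_div (mul_ne_zero hPac'.ne' hPbc'.ne') (mul_ne_zero hPc'.ne' hPt'.ne'),
          Real.log_mul hPac'.ne' hPbc'.ne', Real.log_mul hPc'.ne' hPt'.ne']
      have hle := Real.log_le_sub_one_of_pos hx'
      have hxPt : P t * x = Pac (t.1, t.2.2) * Pbc t.2 / Pc t.2.2 := by
        rw [hx]
        field_simp
      calc P t - g t = P t * (1 - x) := by rw [hgt, ← hxPt]; ring
        _ ≤ P t * (-(Real.log x)) := by
            apply mul_le_mul_of_nonneg_left _ hPt'.le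
            linarith
        _ = P t * (Real.log (P t) + Real.log (Pc t.2.2)
              - Real.log (Pac (t.1, t.2.2)) - Real.log (Pbc t.2)) := by
            rw [hlogx]; ring
  have hsum1 : ∑ t : α × β × γ, P t = 1 := sum_distOf hp _
  have hsum2 : ∑ t : α × β × γ, g t ≤ 1 := by
    have h0 : ∑ t : α × β × γ, g t = ∑ a, ∑ b, ∑ c, g (a, b, c) := by
      rw [Fintype.sum_prod_type]
      exact Finset.sum_congr rfl fun a _ => Fintype.sum_prod_type _
    have h1 : ∑ t : α × β × γ, g t = ∑ c, ∑ a, ∑ b, g (a, b, c) := by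
      rw [h0]
      rw [show (∑ a, ∑ b, ∑ c, g (a, b, c)) = ∑ a, ∑ c, ∑ b, g (a, b, c) from
        Finset.sum_congr rfl fun a _ => Finset.sum_comm]
      exact Finset.sum_comm
    rw [h1]
    have h2 : ∀ c, ∑ a, ∑ b, g (a, b, c) = if Pc c = 0 then 0 else Pc c := by
      intro c
      by_cases hc : Pc c = 0
      · simp only [hg, hc, if_pos, if_true]
        simp
      · rw [if_neg hc]
        have hab : ∀ a b, g (a, b, c) = Pac (a, c) / Pc c * Pbc (b, c) := by
          intro a b; rw [hg]; dsimp only; rw [if_neg hc]; ring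
        calc ∑ a, ∑ b, g (a, b, c) = ∑ a, Pac (a, c) / Pc c * ∑ b, Pbc (b, c) := by
              refine Finset.sum_congr rfl fun a _ => ?_
              rw [Finset.mul_sum]
              exact Finset.sum_congr rfl fun b _ => hab a b
          _ = ∑ a, Pac (a, c) / Pc c * Pc c := by
              refine Finset.sum_congr rfl fun a _ => ?_
              rw [hPbc, hPc, sum_distOf_left]
          _ = ∑ a, Pac (a, c) := by
              refine Finset.sum_congr rfl fun a _ => ?_
              rw [div_mul_cancel₀ _ hc]
          _ = Pc c := by rw [hPac, hPc, sum_distOf_left]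
    calc ∑ c, ∑ a, ∑ b, g (a, b, c) = ∑ c, if Pc c = 0 then 0 else Pc c :=
          Finset.sum_congr rfl fun c _ => h2 c
      _ ≤ ∑ c, Pc c := by
          refine Finset.sum_le_sum fun c _ => ?_
          split
          · exact hPcn c
          · exact le_rfl
      _ = 1 := sum_distOf hp _
  have hfin := Finset.sum_le_sum (s := Finset.univ) (fun t _ => key t)
  rw [Finset.sum_sub_distrib, hsum1] at hfin
  linarith

lemma cmi_eq_zero (hp : IsPMF p)
    (hfac : ∀ t : α × β × γ,
      distOf p (fun ω => (A ω, B ω, C ω)) t * distOf p C t.2.2 =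
        distOf p (fun ω => (A ω, C ω)) (t.1, t.2.2) *
          distOf p (fun ω => (B ω, C ω)) t.2) :
    cmiOf p A B C = 0 := by
  rw [cmi_eq]
  apply Finset.sum_eq_zero
  intro t _
  set P := distOf p (fun ω => (A ω, B ω, C ω)) with hP
  set Pc := distOf p C with hPc
  set Pac := distOf p (fun ω => (A ω, C ω)) with hPac
  set Pbc := distOf p (fun ω => (B ω, C ω)) with hPbc
  by_cases hPt : P t = 0
  · rw [hPt, zero_mul]
  · have hPt' : 0 < P t := lt_of_le_of_ne (distOf_nonneg hp.1 _ t) (Ne.symm hPt)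
    have hPc' : 0 < Pc t.2.2 := lt_of_lt_of_le hPt' (distOf_mono hp.1 (fun ω h => by rw [← h]))
    have hPac' : 0 < Pac (t.1, t.2.2) :=
      lt_of_lt_of_le hPt' (distOf_mono hp.1 (fun ω h => by rw [← h]))
    have hPbc' : 0 < Pbc t.2 :=
      lt_of_lt_of_le hPt' (distOf_mono hp.1 (fun ω h => by rw [← h]))
    have h1 : Real.log (P t * Pc t.2.2) = Real.log (Pac (t.1, t.2.2) * Pbc t.2) := by
      rw [hfac t]
    rw [Real.log_mul hPt'.ne' hPc'.ne', Real.log_mul hPac'.ne' hPbc'.ne'] at h1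
    have : Real.log (P t) + Real.log (Pc t.2.2) - Real.log (Pac (t.1, t.2.2))
        - Real.log (Pbc t.2) = 0 := by linarith
    rw [this, mul_zero]

end CMI

section Tuple
variable {𝒵 : Type*}

lemma snoc_eq_snoc_iff {n : ℕ} {f g : Fin n → 𝒵} {a b : 𝒵} :
    (Fin.snoc f a : Fin (n+1) → 𝒵) = Fin.snoc g b ↔ f = g ∧ a = b := by
  constructor
  · intro h
    constructor
    · have h1 := congrArg Fin.init h
      rwa [Fin.init_snoc, Fin.init_snoc] at h1
    · have h2 := congrFun h (Fin.last n)
      rwa [Fin.snoc_last, Fin.snoc_last] at h2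
  · rintro ⟨rfl, rfl⟩; rfl

lemma snoc_uncurry_injective {n : ℕ} :
    Function.Injective (fun x : 𝒵 × (Fin n → 𝒵) => Fin.snoc x.2 x.1 : 𝒵 × (Fin n → 𝒵) → Fin (n+1) → 𝒵) := by
  rintro ⟨z, f⟩ ⟨z', f'⟩ h
  dsimp at h
  rw [snoc_eq_snoc_iff] at h
  simp [h.1, h.2]

end Tuple

section IID
variable {Ω 𝒵 𝒰 : Type*} [Fintype Ω] [Fintype 𝒵] [Fintype 𝒰]
    [DecidableEq 𝒵] [DecidableEq 𝒰]
    (p : Ω → ℝ) (Z : ℕ → Ω → 𝒵) (U : Ω → 𝒰)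

lemma snoc_pre (n : ℕ) (ω : Ω) :
    (fun i : Fin (n+1) => Z i.val ω) = Fin.snoc (fun i : Fin n => Z i.val ω) (Z n ω) := by
  funext i
  refine Fin.lastCases ?_ ?_ i
  · simp
  · intro j
    simp


lemma base_relabel (m : ℕ) (z : 𝒵) (f : Fin m → 𝒵) (u : 𝒰) :
    distOf p (fun ω => (Z m ω, (fun i : Fin m => Z i.val ω), U ω)) (z, f, u)
      = distOf p (fun ω => ((fun i : Fin (m+1) => Z i.val ω), U ω)) (Fin.snoc f z, u) := by
  unfold distOf
  refine Finset.sum_congr rfl fun ω _ => ?_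
  dsimp only
  simp only [snoc_pre]
  simp only [Prod.mk.injEq, snoc_eq_snoc_iff]
  exact if_congr (by tauto) rfl rfl

lemma marg_step (m j : ℕ) (z : 𝒵) (f : Fin j → 𝒵) (u : 𝒰) :
    distOf p (fun ω => (Z m ω, (fun i : Fin j => Z i.val ω), U ω)) (z, f, u)
      = ∑ z' : 𝒵, distOf p (fun ω => (Z m ω, (fun i : Fin (j+1) => Z i.val ω), U ω))
          (z, Fin.snoc f z', u) := by
  unfold distOf
  rw [Finset.sum_comm]
  refine Finset.sum_congr rfl fun ω _ => ?_
  dsimp only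
  simp only [snoc_pre, Prod.mk.injEq, snoc_eq_snoc_iff]
  by_cases h : Z m ω = z ∧ (fun i : Fin j => Z i.val ω) = f ∧ U ω = u
  · rw [if_pos ⟨h.1, h.2.1, h.2.2⟩]
    have : ∀ z' : 𝒵,
        (if Z m ω = z ∧ ((fun i : Fin j => Z i.val ω) = f ∧ Z j ω = z') ∧ U ω = u then p ω else 0)
          = if Z j ω = z' then p ω else 0 := by
      intro z'
      exact if_congr (by tauto) rfl rfl
    rw [Finset.sum_congr rfl fun z' _ => this z', Finset.sum_ite_eq]
    simp
  · rw [if_neg h, eq_comm]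
    apply Finset.sum_eq_zero
    intro z' _
    rw [if_neg]
    tauto

lemma pre_zero_relabel (m : ℕ) (z : 𝒵) (f : Fin 0 → 𝒵) (u : 𝒰) :
    distOf p (fun ω => (Z m ω, (fun i : Fin 0 => Z i.val ω), U ω)) (z, f, u)
      = distOf p (fun ω => (Z m ω, U ω)) (z, u) := by
  unfold distOf
  refine Finset.sum_congr rfl fun ω _ => ?_
  dsimp only
  simp only [Prod.mk.injEq]
  refine if_congr ?_ rfl rfl
  have : (fun i : Fin 0 => Z i.val ω) = f := Subsingleton.elim _ _
  tauto

lemma S_claim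
    (hiid : ∀ (n : ℕ) (f : Fin n → 𝒵) (u : 𝒰),
      distOf p (fun ω => ((fun i : Fin n => Z i.val ω), U ω)) (f, u) * distOf p U u ^ n =
        distOf p U u * ∏ i : Fin n, distOf p (fun ω => (Z 0 ω, U ω)) (f i, u)) :
    ∀ (d j : ℕ) (z : 𝒵) (f : Fin j → 𝒵) (u : 𝒰),
      distOf p (fun ω => (Z (j+d) ω, (fun i : Fin j => Z i.val ω), U ω)) (z, f, u)
          * distOf p U u ^ (j+1)
        = distOf p U u * distOf p (fun ω => (Z 0 ω, U ω)) (z, u) *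
            ∏ i : Fin j, distOf p (fun ω => (Z 0 ω, U ω)) (f i, u) := by
  intro d
  induction d with
  | zero =>
    intro j z f u
    simp only [Nat.add_zero]
    rw [base_relabel, hiid (j+1) (Fin.snoc f z) u, Fin.prod_univ_castSucc]
    simp only [Fin.snoc_castSucc, Fin.snoc_last]
    ring
  | succ d ih =>
    intro j z f u
    have hidx : j + (d + 1) = (j + 1) + d := by omega
    rw [show (fun ω => (Z (j + (d+1)) ω, (fun i : Fin j => Z i.val ω), U ω))
        = (fun ω => (Z ((j+1) + d) ω, (fun i : Fin j => Z i.val ω), U ω)) from by rw [hidx]]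
    by_cases hπ : distOf p U u = 0
    · rw [hπ, zero_pow (Nat.succ_ne_zero j), zero_mul, mul_zero, zero_mul]
    · have key : distOf p (fun ω => (Z ((j+1)+d) ω, (fun i : Fin j => Z i.val ω), U ω)) (z, f, u)
            * distOf p U u ^ (j+1) * distOf p U u
          = (distOf p U u * distOf p (fun ω => (Z 0 ω, U ω)) (z, u) *
              ∏ i : Fin j, distOf p (fun ω => (Z 0 ω, U ω)) (f i, u)) * distOf p U u := by
        rw [marg_step, Finset.sum_mul, Finset.sum_mul]
        have hterm : ∀ z' : 𝒵,
            distOf p (fun ω => (Z ((j+1)+d) ω, (fun i : Fin (j+1) => Z i.val ω), U ω))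
                (z, Fin.snoc f z', u) * distOf p U u ^ (j+1) * distOf p U u
              = (distOf p U u * distOf p (fun ω => (Z 0 ω, U ω)) (z, u) *
                  ∏ i : Fin j, distOf p (fun ω => (Z 0 ω, U ω)) (f i, u))
                * distOf p (fun ω => (Z 0 ω, U ω)) (z', u) := by
          intro z'
          have h2 := ih (j+1) z (Fin.snoc f z') u
          rw [Fin.prod_univ_castSucc] at h2
          simp only [Fin.snoc_castSucc, Fin.snoc_last] at h2
          calc distOf p (fun ω => (Z ((j+1)+d) ω, (fun i : Fin (j+1) => Z i.val ω), U ω))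
                  (z, Fin.snoc f z', u) * distOf p U u ^ (j+1) * distOf p U u
              = distOf p (fun ω => (Z ((j+1)+d) ω, (fun i : Fin (j+1) => Z i.val ω), U ω))
                  (z, Fin.snoc f z', u) * distOf p U u ^ (j+1+1) := by ring
            _ = _ := by rw [h2]; ring
        rw [Finset.sum_congr rfl fun z' _ => hterm z', ← Finset.mul_sum]
        rw [show (∑ z' : 𝒵, distOf p (fun ω => (Z 0 ω, U ω)) (z', u)) = distOf p U u from
          sum_distOf_left _ _ _]
      exact mul_right_cancel₀ hπ key
  

variable (hp : IsPMF p)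
variable (hiid : ∀ (n : ℕ) (f : Fin n → 𝒵) (u : 𝒰),
      distOf p (fun ω => ((fun i : Fin n => Z i.val ω), U ω)) (f, u) * distOf p U u ^ n =
        distOf p U u * ∏ i : Fin n, distOf p (fun ω => (Z 0 ω, U ω)) (f i, u))

set_option linter.unusedSectionVars false

include hp hiid

/-- Exchangeability: (Z_m, Z_{<k}, U) has the same law as (Z_k, Z_{<k}, U) for k ≤ m. -/
lemma exch_triple (k m : ℕ) (hk : k ≤ m) (z : 𝒵) (f : Fin k → 𝒵) (u : 𝒰) :
    distOf p (fun ω => (Z m ω, (fun i : Fin k => Z i.val ω), U ω)) (z, f, u)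
      = distOf p (fun ω => (Z k ω, (fun i : Fin k => Z i.val ω), U ω)) (z, f, u) := by
  by_cases hπ : distOf p U u = 0
  · have h1 : distOf p (fun ω => (Z m ω, (fun i : Fin k => Z i.val ω), U ω)) (z, f, u) ≤ 0 := by
      rw [← hπ]
      exact distOf_mono hp.1 (fun ω h => congrArg (fun s => s.2.2) h)
    have h2 : distOf p (fun ω => (Z k ω, (fun i : Fin k => Z i.val ω), U ω)) (z, f, u) ≤ 0 := by
      rw [← hπ]
      exact distOf_mono hp.1 (fun ω h => congrArg (fun s => s.2.2) h)
    have h1' := distOf_nonneg hp.1 (fun ω => (Z m ω, (fun i : Fin k => Z i.val ω), U ω)) (z, f, u)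
    have h2' := distOf_nonneg hp.1 (fun ω => (Z k ω, (fun i : Fin k => Z i.val ω), U ω)) (z, f, u)
    linarith
  · have e1 := S_claim p Z U hiid (m - k) k z f u
    have e2 := S_claim p Z U hiid 0 k z f u
    rw [show k + (m - k) = m from by omega] at e1
    rw [show k + 0 = k from rfl] at e2
    have := e1.trans e2.symm
    exact mul_right_cancel₀ (pow_ne_zero _ hπ) this

/-- The law of (Z_m, U) equals the law of (Z_0, U). -/
lemma distZU (m : ℕ) (z : 𝒵) (u : 𝒰) :
    distOf p (fun ω => (Z m ω, U ω)) (z, u) = distOf p (fun ω => (Z 0 ω, U ω)) (z, u) := by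
  by_cases hπ : distOf p U u = 0
  · have h1 : distOf p (fun ω => (Z m ω, U ω)) (z, u) ≤ 0 := by
      rw [← hπ]; exact distOf_mono hp.1 (fun ω h => congrArg (fun s => s.2) h)
    have h2 : distOf p (fun ω => (Z 0 ω, U ω)) (z, u) ≤ 0 := by
      rw [← hπ]; exact distOf_mono hp.1 (fun ω h => congrArg (fun s => s.2) h)
    have h1' := distOf_nonneg hp.1 (fun ω => (Z m ω, U ω)) (z, u)
    have h2' := distOf_nonneg hp.1 (fun ω => (Z 0 ω, U ω)) (z, u)
    linarith
  · have e1 := S_claim p Z U hiid m 0 z (fun i => i.elim0) u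
    rw [show (0 + m) = m from by omega] at e1
    rw [pre_zero_relabel] at e1
    simp only [Finset.univ_eq_empty, Finset.prod_empty, mul_one] at e1
    exact mul_right_cancel₀ hπ (by linear_combination e1)

/-- Unconditional exchangeability of the pair (Z_m, Z_{<k}). -/
lemma exch_pair (k m : ℕ) (hk : k ≤ m) (z : 𝒵) (f : Fin k → 𝒵) :
    distOf p (fun ω => (Z m ω, (fun i : Fin k => Z i.val ω))) (z, f)
      = distOf p (fun ω => (Z k ω, (fun i : Fin k => Z i.val ω))) (z, f) := by
  have h1 := sum_distOf_trd (p := p) (Z m) (fun ω => (fun i : Fin k => Z i.val ω)) U z f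
  have h2 := sum_distOf_trd (p := p) (Z k) (fun ω => (fun i : Fin k => Z i.val ω)) U z f
  rw [← h1, ← h2]
  exact Finset.sum_congr rfl fun u _ => exch_triple p Z U hp hiid k m hk z f u

/-- Conditional independence of Z_k and Z_{<k} given U (factorized form). -/
lemma fact_kk (k : ℕ) (t : 𝒵 × (Fin k → 𝒵) × 𝒰) :
    distOf p (fun ω => (Z k ω, (fun i : Fin k => Z i.val ω), U ω)) t * distOf p U t.2.2
      = distOf p (fun ω => (Z k ω, U ω)) (t.1, t.2.2) *
          distOf p (fun ω => ((fun i : Fin k => Z i.val ω), U ω)) t.2 := by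
  obtain ⟨z, f, u⟩ := t
  dsimp only
  by_cases hπ : distOf p U u = 0
  · have h1 : distOf p (fun ω => (Z k ω, U ω)) (z, u) ≤ 0 := by
      rw [← hπ]; exact distOf_mono hp.1 (fun ω h => congrArg (fun s => s.2) h)
    have h1' := distOf_nonneg hp.1 (fun ω => (Z k ω, U ω)) (z, u)
    rw [hπ, mul_zero, show distOf p (fun ω => (Z k ω, U ω)) (z, u) = 0 from le_antisymm h1 h1',
      zero_mul]
  · have e1 := S_claim p Z U hiid 0 k z f u
    rw [show k + 0 = k from rfl] at e1
    have e2 := hiid k f u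
    have e3 := distZU p Z U hp hiid k z u
    rw [← e3] at e1
    apply mul_right_cancel₀ (pow_ne_zero k hπ)
    linear_combination e1 - distOf p (fun ω => (Z k ω, U ω)) (z, u) * e2



omit hp hiid in
lemma ent_snoc (n : ℕ) :
    entOf p (fun ω => (fun i : Fin (n+1) => Z i.val ω))
      = entOf p (fun ω => (Z n ω, (fun i : Fin n => Z i.val ω))) := by
  have h : (fun ω => (fun i : Fin (n+1) => Z i.val ω))
      = fun ω => ((fun x : 𝒵 × (Fin n → 𝒵) => (Fin.snoc x.2 x.1 : Fin (n+1) → 𝒵))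
          ((Z n ω, (fun i : Fin n => Z i.val ω)))) := by
    funext ω; exact snoc_pre Z n ω
  rw [h, entOf_comp_inj p _ snoc_uncurry_injective]

omit hp hiid in
lemma ent_snoc_U (n : ℕ) :
    entOf p (fun ω => (U ω, (fun i : Fin (n+1) => Z i.val ω)))
      = entOf p (fun ω => (U ω, Z n ω, (fun i : Fin n => Z i.val ω))) := by
  have h : (fun ω => (U ω, (fun i : Fin (n+1) => Z i.val ω)))
      = fun ω => ((fun x : 𝒰 × 𝒵 × (Fin n → 𝒵) => (x.1, (Fin.snoc x.2.2 x.2.1 : Fin (n+1) → 𝒵)))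
          ((U ω, Z n ω, (fun i : Fin n => Z i.val ω)))) := by
    funext ω
    dsimp only
    rw [snoc_pre]
  have hinj : Function.Injective
      (fun x : 𝒰 × 𝒵 × (Fin n → 𝒵) => (x.1, (Fin.snoc x.2.2 x.2.1 : Fin (n+1) → 𝒵))) := by
    rintro ⟨u1, z1, f1⟩ ⟨u2, z2, f2⟩ hh
    simp only [Prod.mk.injEq, snoc_eq_snoc_iff] at hh ⊢
    tauto
  rw [h, entOf_comp_inj p _ hinj]

lemma chain (n : ℕ) :
    miOf p U (fun ω => (fun i : Fin n => Z i.val ω))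
      = ∑ k ∈ Finset.range n, cmiOf p U (Z k) (fun ω => (fun i : Fin k => Z i.val ω)) := by
  induction n with
  | zero =>
    rw [Finset.range_zero, Finset.sum_empty]
    unfold miOf
    have h1 : entOf p (fun ω => (fun i : Fin 0 => Z i.val ω)) = 0 := by
      unfold entOf
      rw [Finset.sum_eq_zero, neg_zero]
      intro a _
      have hd : distOf p (fun ω => (fun i : Fin 0 => Z i.val ω)) a = 1 := by
        unfold distOf
        rw [Finset.sum_congr rfl fun ω _ => if_pos (Subsingleton.elim _ _), hp.2]
      rw [hd, Real.log_one, mul_zero]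
    have h2 : entOf p (fun ω => (U ω, (fun i : Fin 0 => Z i.val ω))) = entOf p U := by
      have h : (fun ω => (U ω, (fun i : Fin 0 => Z i.val ω)))
          = fun ω => ((fun x : 𝒰 => (x, (fun i : Fin 0 => (i.elim0 : 𝒵)))) (U ω)) := by
        funext ω
        dsimp only
        rw [Prod.mk.injEq]
        exact ⟨rfl, Subsingleton.elim _ _⟩
      have hinj : Function.Injective
          (fun x : 𝒰 => (x, (fun i : Fin 0 => (i.elim0 : 𝒵)))) := by
        intro a b hh
        exact congrArg Prod.fst hh
      rw [h, entOf_comp_inj p _ hinj]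
    rw [h1, h2]
    ring
  | succ n ih =>
    rw [Finset.sum_range_succ, ← ih]
    unfold miOf cmiOf condEntOf
    beta_reduce
    rw [ent_snoc, ent_snoc_U]
    ring

lemma condent_const (m : ℕ) :
    entOf p (fun ω => (Z m ω, (U ω, (fun i : Fin m => Z i.val ω))))
      - entOf p (fun ω => (U ω, (fun i : Fin m => Z i.val ω)))
    = entOf p (fun ω => (Z 0 ω, U ω)) - entOf p U := by
  have hnull : cmiOf p (Z m) (fun ω => (fun i : Fin m => Z i.val ω)) U = 0 :=
    cmi_eq_zero _ _ _ hp (fun t => fact_kk p Z U hp hiid m t)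
  unfold cmiOf condEntOf at hnull
  beta_reduce at hnull
  have hZU : entOf p (fun ω => (Z m ω, U ω)) = entOf p (fun ω => (Z 0 ω, U ω)) :=
    entOf_congr (fun a => distZU p Z U hp hiid m a.1 a.2)
  have hswap : entOf p (fun ω => (U ω, (fun i : Fin m => Z i.val ω)))
      = entOf p (fun ω => ((fun i : Fin m => Z i.val ω), U ω)) := by
    have h : (fun ω => (U ω, (fun i : Fin m => Z i.val ω)))
        = fun ω => ((fun x : (Fin m → 𝒵) × 𝒰 => (x.2, x.1))
            (((fun i : Fin m => Z i.val ω)), U ω)) := rfl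
    have hinj : Function.Injective (fun x : (Fin m → 𝒵) × 𝒰 => (x.2, x.1)) := by
      rintro ⟨f1, u1⟩ ⟨f2, u2⟩ hh
      simp only [Prod.mk.injEq] at hh ⊢
      tauto
    rw [h, entOf_comp_inj p _ hinj]
  have hswap2 : entOf p (fun ω => (Z m ω, (U ω, (fun i : Fin m => Z i.val ω))))
      = entOf p (fun ω => (Z m ω, ((fun i : Fin m => Z i.val ω), U ω))) := by
    have h : (fun ω => (Z m ω, (U ω, (fun i : Fin m => Z i.val ω))))
        = fun ω => ((fun x : 𝒵 × (Fin m → 𝒵) × 𝒰 => (x.1, x.2.2, x.2.1))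
            ((Z m ω, (fun i : Fin m => Z i.val ω), U ω))) := rfl
    have hinj : Function.Injective
        (fun x : 𝒵 × (Fin m → 𝒵) × 𝒰 => (x.1, x.2.2, x.2.1)) := by
      rintro ⟨z1, f1, u1⟩ ⟨z2, f2, u2⟩ hh
      simp only [Prod.mk.injEq] at hh ⊢
      tauto
    rw [h, entOf_comp_inj p _ hinj]
  linarith

lemma sym_form (m : ℕ) :
    cmiOf p U (Z m) (fun ω => (fun i : Fin m => Z i.val ω))
      = entOf p (fun ω => (Z m ω, (fun i : Fin m => Z i.val ω)))
        - entOf p (fun ω => (fun i : Fin m => Z i.val ω))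
        - (entOf p (fun ω => (Z 0 ω, U ω)) - entOf p U) := by
  have h2 := condent_const p Z U hp hiid m
  unfold cmiOf condEntOf
  beta_reduce
  have h1 : entOf p (fun ω => (U ω, Z m ω, (fun i : Fin m => Z i.val ω)))
      = entOf p (fun ω => (Z m ω, (U ω, (fun i : Fin m => Z i.val ω)))) := by
    have h : (fun ω => (Z m ω, (U ω, (fun i : Fin m => Z i.val ω))))
        = fun ω => ((fun x : 𝒰 × 𝒵 × (Fin m → 𝒵) => (x.2.1, x.1, x.2.2))
            ((U ω, Z m ω, (fun i : Fin m => Z i.val ω)))) := rfl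
    have hinj : Function.Injective
        (fun x : 𝒰 × 𝒵 × (Fin m → 𝒵) => (x.2.1, x.1, x.2.2)) := by
      rintro ⟨u1, z1, f1⟩ ⟨u2, z2, f2⟩ hh
      simp only [Prod.mk.injEq] at hh ⊢
      tauto
    rw [h, entOf_comp_inj p _ hinj]
  linarith

lemma key_le (k N : ℕ) (hk : k ≤ N) :
    cmiOf p U (Z N) (fun ω => (fun i : Fin N => Z i.val ω))
      ≤ cmiOf p U (Z k) (fun ω => (fun i : Fin k => Z i.val ω)) := by
  rw [sym_form p Z U hp hiid, sym_form p Z U hp hiid]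
  have e7inj : Function.Injective
      (fun x : (Fin (N-k) → 𝒵) × (Fin k → 𝒵) => (fun i : Fin N =>
        if h : i.val < k then x.2 ⟨i.val, h⟩ else x.1 ⟨i.val - k, by omega⟩)) := by
    rintro ⟨w1, f1⟩ ⟨w2, f2⟩ hh
    simp only [Prod.mk.injEq]
    constructor
    · funext j
      have hj : k + j.val < N := by omega
      have := congrFun hh ⟨k + j.val, hj⟩
      simp only [dif_neg (by omega : ¬ (k + j.val < k))] at this
      have hidx : (⟨k + j.val - k, by omega⟩ : Fin (N-k)) = j :=
        Fin.ext (by show k + j.val - k = j.val; omega)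
      rwa [hidx] at this
    · funext j
      have hj : j.val < N := by omega
      have := congrFun hh ⟨j.val, hj⟩
      simp only [dif_pos j.isLt] at this
      have hidx : (⟨j.val, j.isLt⟩ : Fin k) = j := Fin.ext rfl
      rwa [hidx] at this
  have hW : (fun ω => (fun i : Fin N => Z i.val ω))
      = fun ω => ((fun x : (Fin (N-k) → 𝒵) × (Fin k → 𝒵) => (fun i : Fin N =>
          if h : i.val < k then x.2 ⟨i.val, h⟩ else x.1 ⟨i.val - k, by omega⟩))
        (((fun i : Fin (N-k) => Z (k + i.val) ω), (fun i : Fin k => Z i.val ω)))) := by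
    funext ω
    funext i
    by_cases h : i.val < k
    · simp only [dif_pos h]
    · simp only [dif_neg h]
      congr 1
      omega
  have hE1 : entOf p (fun ω => (fun i : Fin N => Z i.val ω))
      = entOf p (fun ω => ((fun i : Fin (N-k) => Z (k + i.val) ω), (fun i : Fin k => Z i.val ω))) := by
    rw [hW, entOf_comp_inj p _ e7inj]
  have hE2 : entOf p (fun ω => (Z N ω, (fun i : Fin N => Z i.val ω)))
      = entOf p (fun ω => (Z N ω, ((fun i : Fin (N-k) => Z (k + i.val) ω), (fun i : Fin k => Z i.val ω)))) := by
    have h : (fun ω => (Z N ω, (fun i : Fin N => Z i.val ω)))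
        = fun ω => ((fun y : 𝒵 × ((Fin (N-k) → 𝒵) × (Fin k → 𝒵)) =>
            (y.1, (fun x : (Fin (N-k) → 𝒵) × (Fin k → 𝒵) => (fun i : Fin N =>
              if h : i.val < k then x.2 ⟨i.val, h⟩ else x.1 ⟨i.val - k, by omega⟩)) y.2))
          ((Z N ω, ((fun i : Fin (N-k) => Z (k + i.val) ω), (fun i : Fin k => Z i.val ω))))) := by
      funext ω
      dsimp only
      rw [Prod.mk.injEq]
      exact ⟨rfl, congrFun hW ω⟩
    have hinj2 : Function.Injective
        (fun y : 𝒵 × ((Fin (N-k) → 𝒵) × (Fin k → 𝒵)) =>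
          (y.1, (fun x : (Fin (N-k) → 𝒵) × (Fin k → 𝒵) => (fun i : Fin N =>
            if h : i.val < k then x.2 ⟨i.val, h⟩ else x.1 ⟨i.val - k, by omega⟩)) y.2)) := by
      rintro ⟨a, b⟩ ⟨c, d⟩ hh
      simp only [Prod.mk.injEq] at hh ⊢
      exact ⟨hh.1, e7inj hh.2⟩
    rw [h, entOf_comp_inj p _ hinj2]
  have hE3 : entOf p (fun ω => (Z N ω, (fun i : Fin k => Z i.val ω)))
      = entOf p (fun ω => (Z k ω, (fun i : Fin k => Z i.val ω))) :=
    entOf_congr (fun a => exch_pair p Z U hp hiid k N hk a.1 a.2)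
  have h0 := cmi_nonneg (Z N) (fun ω => (fun i : Fin (N-k) => Z (k + i.val) ω))
      (fun ω => (fun i : Fin k => Z i.val ω)) (p := p) hp
  unfold cmiOf condEntOf at h0
  beta_reduce at h0
  linarith

end IID


/-- if Z_0, Z_1, ... are conditionally i.i.d. given U, then
I(U; Z_0,...,Z_{N-1}) ≥ N · I(U; Z_N | Z_0,...,Z_{N-1}). -/
theorem mi_ge_N_mul_cmi
    {Ω 𝒵 𝒰 : Type*} [Fintype Ω] [Fintype 𝒵] [Fintype 𝒰]
    [DecidableEq 𝒵] [DecidableEq 𝒰]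
    (p : Ω → ℝ) (hp : IsPMF p) (N : ℕ)
    (Z : ℕ → Ω → 𝒵) (U : Ω → 𝒰)
    (hiid : ∀ (n : ℕ) (f : Fin n → 𝒵) (u : 𝒰),
      distOf p (fun ω => ((fun i : Fin n => Z i.val ω), U ω)) (f, u) * distOf p U u ^ n =
        distOf p U u * ∏ i : Fin n, distOf p (fun ω => (Z 0 ω, U ω)) (f i, u)) :
    (N : ℝ) * cmiOf p U (Z N) (fun ω => (fun i : Fin N => Z i.val ω)) ≤
      miOf p U (fun ω => (fun i : Fin N => Z i.val ω)) := by
  have hchain := chain p Z U hp hiid N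
  have hkey : ∀ k ∈ Finset.range N,
      cmiOf p U (Z N) (fun ω => (fun i : Fin N => Z i.val ω))
        ≤ cmiOf p U (Z k) (fun ω => (fun i : Fin k => Z i.val ω)) :=
    fun k hk => key_le p Z U hp hiid k N (Nat.le_of_lt (Finset.mem_range.mp hk))
  calc (N : ℝ) * cmiOf p U (Z N) (fun ω => (fun i : Fin N => Z i.val ω))
      = ∑ _k ∈ Finset.range N, cmiOf p U (Z N) (fun ω => (fun i : Fin N => Z i.val ω)) := by
        rw [Finset.sum_const, Finset.card_range, nsmul_eq_mul]
    _ ≤ ∑ k ∈ Finset.range N, cmiOf p U (Z k) (fun ω => (fun i : Fin k => Z i.val ω)) :=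
        Finset.sum_le_sum hkey
    _ = miOf p U (fun ω => (fun i : Fin N => Z i.val ω)) := hchain.symm
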